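/- arXiv:0909.3740 — 2 statements merged into one kernel-verified Lean document; each statement's English description precedes it below -/
import Mathlib

section
/- Let (A,≻,≺) be a finite-dimensional dendriform algebra and (l_≻,r_≻,l_≺,r_≺,V) a bimodule with V finite-dimensional; the dual bimodule (r_≻*+r_≺*, −l_≺*, −r_≻*, l_≻*+l_≺*, V*) is again a bimodule of (A,≻,≺). Let T : V → A be a linear map, identified with the element T = Σ_i T(v_i)⊗v_i* of A⊗V* ⊂ (A⊕V*)⊗(A⊕V*) for a basis {v_i} of V with dual basis {v_i*}. Then r = T + σ(T) is a symmetric solution of the D-equation in the semidirect product dendriform algebra A⋉V* formed with the dual bimodule if and only if T is an O-operator of (A,≻,≺) associated to (l_≻,r_≻,l_≺,r_≺,V). -/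
set_option synthInstance.maxHeartbeats 1000000
set_option maxHeartbeats 1000000

open TensorProduct LinearMap Module

/-- Dendriform algebra axioms for a pair of bilinear products `succ` (≻) and `prec` (≺). -/
def IsDendriform {K A : Type*} [Field K] [AddCommGroup A] [Module K A]
    (succ prec : A →ₗ[K] A →ₗ[K] A) : Prop :=
  (∀ x y z : A, prec (prec x y) z = prec x (succ y z + prec y z)) ∧
  (∀ x y z : A, prec (succ x y) z = succ x (prec y z)) ∧
  (∀ x y z : A, succ x (succ y z) = succ (succ x y + prec x y) z)

/-- Bimodule of a dendriform algebra `(A, succ, prec)` on `V`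
(maps `l_≻ = ls`, `r_≻ = rs`, `l_≺ = lp`, `r_≺ = rp`). -/
def IsDendBimodule {K A V : Type*} [Field K] [AddCommGroup A] [Module K A]
    [AddCommGroup V] [Module K V] (succ prec : A →ₗ[K] A →ₗ[K] A)
    (ls rs lp rp : A →ₗ[K] V →ₗ[K] V) : Prop :=
  (∀ x y : A, lp (prec x y) = lp x ∘ₗ (lp y + ls y)) ∧
  (∀ x y : A, rp x ∘ₗ lp y = lp y ∘ₗ (rp x + rs x)) ∧
  (∀ x y : A, rp x ∘ₗ rp y = rp (succ y x + prec y x)) ∧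
  (∀ x y : A, lp (succ x y) = ls x ∘ₗ lp y) ∧
  (∀ x y : A, rp x ∘ₗ ls y = ls y ∘ₗ rp x) ∧
  (∀ x y : A, rp x ∘ₗ rs y = rs (prec y x)) ∧
  (∀ x y : A, ls (succ x y + prec x y) = ls x ∘ₗ ls y) ∧
  (∀ x y : A, rs x ∘ₗ (lp y + ls y) = ls y ∘ₗ rs x) ∧
  (∀ x y : A, rs x ∘ₗ (rs y + rp y) = rs (succ y x))

/-- `r₁₂ ∘ r₁₃` for `r ∈ B ⊗ B`: `Σ (aᵢ ∘ aⱼ) ⊗ bᵢ ⊗ bⱼ`. -/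
noncomputable def tprod12_13 {K B : Type*} [Field K] [AddCommGroup B] [Module K B]
    (m : B →ₗ[K] B →ₗ[K] B) (r : B ⊗[K] B) : B ⊗[K] (B ⊗[K] B) :=
  (TensorProduct.map (TensorProduct.lift m) LinearMap.id)
    ((TensorProduct.tensorTensorTensorComm K B B B B) (r ⊗ₜ[K] r))

/-- `r₁₃ ∘ r₂₃` for `r ∈ B ⊗ B`: `Σ aᵢ ⊗ aⱼ ⊗ (bᵢ ∘ bⱼ)`. -/
noncomputable def tprod13_23 {K B : Type*} [Field K] [AddCommGroup B] [Module K B]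
    (m : B →ₗ[K] B →ₗ[K] B) (r : B ⊗[K] B) : B ⊗[K] (B ⊗[K] B) :=
  (TensorProduct.assoc K B B B)
    ((TensorProduct.map LinearMap.id (TensorProduct.lift m))
      ((TensorProduct.tensorTensorTensorComm K B B B B) (r ⊗ₜ[K] r)))

/-- `r₂₃ ∘ r₁₂` for `r ∈ B ⊗ B`: `Σ aᵢ ⊗ (aⱼ ∘ bᵢ) ⊗ bⱼ`. -/
noncomputable def tprod23_12 {K B : Type*} [Field K] [AddCommGroup B] [Module K B]
    (m : B →ₗ[K] B →ₗ[K] B) (r : B ⊗[K] B) : B ⊗[K] (B ⊗[K] B) :=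
  (TensorProduct.map LinearMap.id (TensorProduct.comm K B B).toLinearMap)
    ((TensorProduct.assoc K B B B)
      ((TensorProduct.map LinearMap.id (TensorProduct.lift m))
        ((TensorProduct.tensorTensorTensorComm K B B B B)
          ((TensorProduct.map (TensorProduct.comm K B B).toLinearMap LinearMap.id)
            ((TensorProduct.tensorTensorTensorComm K B B B B) (r ⊗ₜ[K] r))))))

/-- Dualization `ρ ↦ ρ*` of an action `ρ : A →ₗ End V`, via transpose:
`⟨ρ*(x) v*, u⟩ = ⟨v*, ρ(x) u⟩`. -/
noncomputable def dualize {K A V : Type*} [Field K] [AddCommGroup A] [Module K A]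
    [AddCommGroup V] [Module K V] (ρ : A →ₗ[K] V →ₗ[K] V) :
    A →ₗ[K] Module.Dual K V →ₗ[K] Module.Dual K V :=
  (Module.Dual.transpose (R := K)) ∘ₗ ρ

/-- The semidirect-product bilinear product on `A × W` given by a product `m` on `A`
and a left action `φ` and a right action `ψ` of `A` on `W`:
`(x, a) ∘ (y, b) = (m x y, φ(x) b + ψ(y) a)`. -/
noncomputable def sd {K A W : Type*} [Field K] [AddCommGroup A] [Module K A]
    [AddCommGroup W] [Module K W]
    (m : A →ₗ[K] A →ₗ[K] A) (φ ψ : A →ₗ[K] W →ₗ[K] W) :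
    (A × W) →ₗ[K] (A × W) →ₗ[K] (A × W) :=
  ((m.compl₁₂ (LinearMap.fst K A W) (LinearMap.fst K A W)).compr₂ (LinearMap.inl K A W))
  + ((((φ.comp (LinearMap.fst K A W)).compl₂ (LinearMap.snd K A W))
      + (((ψ.comp (LinearMap.fst K A W)).compl₂ (LinearMap.snd K A W)).flip)).compr₂
      (LinearMap.inr K A W))

/-- The linear map `T : V → A` regarded as the element `Σ T(vᵢ) ⊗ vᵢ*` of
`A ⊗ V* ⊆ (A ⊕ V*) ⊗ (A ⊕ V*)`. -/
noncomputable def asTensor {K A V : Type*} [Field K] [AddCommGroup A] [Module K A]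
    [AddCommGroup V] [Module K V] [FiniteDimensional K V] (T : V →ₗ[K] A) :
    (A × Module.Dual K V) ⊗[K] (A × Module.Dual K V) :=
  (TensorProduct.map (LinearMap.inl K A (Module.Dual K V))
      (LinearMap.inr K A (Module.Dual K V)))
    ((TensorProduct.comm K (Module.Dual K V) A)
      ((dualTensorHomEquiv K V A).symm T))

section P1
variable {K A V : Type*} [Field K] [AddCommGroup A] [Module K A]
    [AddCommGroup V] [Module K V]

lemma dualize_apply (ρ : A →ₗ[K] V →ₗ[K] V) (x : A) (ξ : Module.Dual K V) (u : V) :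
    dualize ρ x ξ u = ξ (ρ x u) := rfl

lemma dualBimodule (succ prec : A →ₗ[K] A →ₗ[K] A)
    (ls rs lp rp : A →ₗ[K] V →ₗ[K] V)
    (hbim : IsDendBimodule succ prec ls rs lp rp) :
    IsDendBimodule succ prec
      (dualize (rs + rp)) (dualize (-lp)) (dualize (-rs)) (dualize (ls + lp)) := by
  obtain ⟨h1, h2, h3, h4, h5, h6, h7, h8, h9⟩ := hbim
  have H1 : ∀ x y u, lp (prec x y) u = lp x (lp y u) + lp x (ls y u) :=
    fun x y u => by have := LinearMap.congr_fun (h1 x y) u; simpa using this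
  have H2 : ∀ x y u, rp x (lp y u) = lp y (rp x u) + lp y (rs x u) :=
    fun x y u => by have := LinearMap.congr_fun (h2 x y) u; simpa using this
  have H3 : ∀ x y u, rp x (rp y u) = rp (succ y x) u + rp (prec y x) u :=
    fun x y u => by have := LinearMap.congr_fun (h3 x y) u; simpa [map_add] using this
  have H4 : ∀ x y u, lp (succ x y) u = ls x (lp y u) :=
    fun x y u => by have := LinearMap.congr_fun (h4 x y) u; simpa using this
  have H5 : ∀ x y u, rp x (ls y u) = ls y (rp x u) :=
    fun x y u => by have := LinearMap.congr_fun (h5 x y) u; simpa using this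
  have H6 : ∀ x y u, rp x (rs y u) = rs (prec y x) u :=
    fun x y u => by have := LinearMap.congr_fun (h6 x y) u; simpa using this
  have H7 : ∀ x y u, ls (succ x y) u + ls (prec x y) u = ls x (ls y u) :=
    fun x y u => by have := LinearMap.congr_fun (h7 x y) u; simpa [map_add] using this
  have H8 : ∀ x y u, rs x (lp y u) + rs x (ls y u) = ls y (rs x u) :=
    fun x y u => by have := LinearMap.congr_fun (h8 x y) u; simpa using this
  have H9 : ∀ x y u, rs x (rs y u) + rs x (rp y u) = rs (succ y x) u :=
    fun x y u => by have := LinearMap.congr_fun (h9 x y) u; simpa using this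
  refine ⟨?_, ?_, ?_, ?_, ?_, ?_, ?_, ?_, ?_⟩ <;> intro x y <;>
    refine LinearMap.ext fun ξ => LinearMap.ext fun u => ?_ <;>
    simp only [dualize_apply, comp_apply, LinearMap.add_apply, LinearMap.neg_apply, dualize, map_add, map_neg,
      LinearMap.add_apply, LinearMap.neg_apply, Module.Dual.transpose_apply, LinearMap.comp_apply]
  · have e := DFunLike.congr_arg ξ (H6 y x u); linear_combination e
  · have e := DFunLike.congr_arg ξ (H8 y x u); simp only [map_add] at e; linear_combination -e
  · have e7 := DFunLike.congr_arg ξ (H7 y x u); have e4 := DFunLike.congr_arg ξ (H4 y x u)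
    have e1 := DFunLike.congr_arg ξ (H1 y x u)
    simp only [map_add] at e7 e4 e1; linear_combination -e7 - e4 - e1
  · have e := DFunLike.congr_arg ξ (H9 y x u); simp only [map_add] at e; linear_combination e
  · have e8 := DFunLike.congr_arg ξ (H8 y x u); have e5 := DFunLike.congr_arg ξ (H5 y x u)
    have e2 := DFunLike.congr_arg ξ (H2 y x u)
    simp only [map_add] at e8 e5 e2; linear_combination e8 + e5 + e2
  · have e := DFunLike.congr_arg ξ (H1 y x u); simp only [map_add] at e; linear_combination e
  · have e9 := DFunLike.congr_arg ξ (H9 y x u); have e6 := DFunLike.congr_arg ξ (H6 y x u)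
    have e3 := DFunLike.congr_arg ξ (H3 y x u)
    simp only [map_add] at e9 e6 e3; linear_combination -e9 - e6 - e3
  · have e := DFunLike.congr_arg ξ (H2 y x u); simp only [map_add] at e; linear_combination -e
  · have e := DFunLike.congr_arg ξ (H4 y x u); linear_combination e
end P1
section P2
variable {K A V : Type*} [Field K] [AddCommGroup A] [Module K A]
    [AddCommGroup V] [Module K V]

lemma sd_apply (m : A →ₗ[K] A →ₗ[K] A) (φ ψ : A →ₗ[K] V →ₗ[K] V)
    (x y : A) (a b : V) : sd m φ ψ (x, a) (y, b) = (m x y, φ x b + ψ y a) := by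
  simp [sd, Prod.ext_iff]

/-- product-form functionals on `A × Dual K V` -/
noncomputable def mkF (x : Module.Dual K A) (w : V) : Module.Dual K (A × Module.Dual K V) :=
  x ∘ₗ LinearMap.fst K A (Module.Dual K V)
    + (Module.Dual.eval K V w) ∘ₗ LinearMap.snd K A (Module.Dual K V)

lemma mkF_apply (x : Module.Dual K A) (w : V) (p : A) (ξ : Module.Dual K V) :
    mkF x w (p, ξ) = x p + ξ w := by simp [mkF]

/-- triple evaluation functional -/
noncomputable def ev3 {B : Type*} [AddCommGroup B] [Module K B]
    (F G H : Module.Dual K B) : B ⊗[K] (B ⊗[K] B) →ₗ[K] K :=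
  TensorProduct.lift (((LinearMap.mul K K).compl₁₂ F
    (TensorProduct.lift (((LinearMap.mul K K).compl₁₂ G H)))).compl₂ LinearMap.id)

lemma ev3_tmul {B : Type*} [AddCommGroup B] [Module K B]
    (F G H : Module.Dual K B) (p q s : B) :
    ev3 F G H (p ⊗ₜ (q ⊗ₜ s)) = F p * (G q * H s) := by
  simp [ev3]

end P2
section P2b
variable {K A V : Type*} [Field K] [AddCommGroup A] [Module K A]
    [AddCommGroup V] [Module K V]

lemma sep {B : Type*} [AddCommGroup B] [Module K B] [FiniteDimensional K B]
    {t : B ⊗[K] (B ⊗[K] B)}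
    (h : ∀ F G H : Module.Dual K B, ev3 F G H t = 0) : t = 0 := by
  classical
  set c := Basis.ofVectorSpace K B
  set c3 := c.tensorProduct (c.tensorProduct c) with hc3
  have key : ∀ i j k,
      (Finsupp.lapply (i, (j, k))).comp (c3.repr.toLinearMap)
        = ev3 (c.coord i) (c.coord j) (c.coord k) := by
    intro i j k
    apply TensorProduct.ext'
    intro p qs
    induction qs using TensorProduct.induction_on with
    | zero => simp
    | tmul q s =>
        simp [hc3, ev3_tmul, Basis.tensorProduct_repr_tmul_apply, Basis.coord_apply,
          smul_eq_mul]
        ring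
    | add q s hq hs =>
        simp only [LinearMap.comp_apply, Finsupp.lapply_apply, LinearEquiv.coe_toLinearMap]
          at hq hs ⊢
        simp [tmul_add, hq, hs]
  have : c3.repr t = 0 := by
    ext ijk
    obtain ⟨i, j, k⟩ := ijk
    have := LinearMap.congr_fun (key i j k) t
    simpa using this.trans (h _ _ _)
  simpa using c3.repr.map_eq_zero_iff.mp this

lemma dualTensor_sum [FiniteDimensional K V] {ι : Type*} [Fintype ι]
    (b : Basis ι K V) (T : V →ₗ[K] A) :
    (dualTensorHomEquiv K V A).symm T = ∑ i, b.coord i ⊗ₜ[K] T (b i) := by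
  rw [LinearEquiv.symm_apply_eq]
  ext u
  simp only [map_sum, dualTensorHomEquiv, dualTensorHomEquivOfBasis_apply]
  simp only [LinearMap.coe_sum, Finset.sum_apply, dualTensorHom_apply, Basis.coord_apply,
    ← map_smul, ← map_sum]
  conv_lhs => rw [← b.sum_repr u]
  simp
  simp only [← map_smul, ← map_sum, b.sum_repr u]

lemma asTensor_eq [FiniteDimensional K V] {ι : Type*} [Fintype ι]
    (b : Basis ι K V) (T : V →ₗ[K] A) :
    asTensor T = ∑ i, ((T (b i), 0) : A × Module.Dual K V)
      ⊗ₜ[K] ((0, b.coord i) : A × Module.Dual K V) := by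
  rw [asTensor, dualTensor_sum b T]
  simp [map_sum]

end P2b
section P2c
variable {K A V : Type*} [Field K] [AddCommGroup A] [Module K A]
    [AddCommGroup V] [Module K V]
    {ι : Type*} [Fintype ι]

lemma sum1 (b : Basis ι K V) (S : V →ₗ[K] K) (u : V) :
    ∑ i, b.coord i u * S (b i) = S u := by
  simp only [Basis.coord_apply, ← smul_eq_mul, ← map_smul, ← map_sum, b.sum_repr u]

lemma collapseA (b : Basis ι K V) (S : V →ₗ[K] V →ₗ[K] K) (u v : V) :
    ∑ j : ι, ∑ i : ι, b.coord i u * (b.coord j v * S (b i) (b j)) = S u v := by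
  have h : ∀ j : ι, ∑ i : ι, b.coord i u * (b.coord j v * S (b i) (b j))
      = b.coord j v * S u (b j) := by
    intro j
    have h2 := sum1 b (b.coord j v • S.flip (b j)) u
    simp only [LinearMap.smul_apply, smul_eq_mul, LinearMap.flip_apply] at h2
    rw [← h2]
  simp only [h]
  exact sum1 b (S u) v
lemma collapseB (b : Basis ι K V) (N : V →ₗ[K] V) (S : V →ₗ[K] K) (u : V) :
    ∑ i : ι, ∑ j : ι, b.coord i u * (b.coord j (N (b i)) * S (b j)) = S (N u) := by
  have h : ∀ i : ι, ∑ j : ι, b.coord i u * (b.coord j (N (b i)) * S (b j))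
      = b.coord i u * (S ∘ₗ N) (b i) := by
    intro i
    rw [← Finset.mul_sum, sum1 b S (N (b i))]; rfl
  simp only [h]
  exact sum1 b (S ∘ₗ N) u
end P2c

section P2d
variable {K A V : Type*} [Field K] [AddCommGroup A] [Module K A]
    [AddCommGroup V] [Module K V]
    {ι : Type*} [Fintype ι]

lemma collapseB' (b : Basis ι K V) (N : V →ₗ[K] V) (S : V →ₗ[K] K) (u : V) :
    ∑ j : ι, ∑ i : ι, b.coord i u * (b.coord j (N (b i)) * S (b j)) = S (N u) := by
  rw [Finset.sum_comm]; exact collapseB b N S u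

variable (b : Basis ι K V) (succ prec : A →ₗ[K] A →ₗ[K] A)
    (ls rs lp rp : A →ₗ[K] V →ₗ[K] V) (T : V →ₗ[K] A)
    (x1 x2 x3 : Module.Dual K A) (w1 w2 w3 : V)

lemma E1213 :
    ev3 (mkF x1 w1) (mkF x2 w2) (mkF x3 w3)
      (tprod12_13
        (sd succ (dualize (rs + rp)) (dualize (-lp))
          + sd prec (dualize (-rs)) (dualize (ls + lp)))
        (∑ i, (((T (b i), 0) : A × Module.Dual K V) ⊗ₜ[K] ((0, b.coord i) : A × Module.Dual K V)
          + ((0, b.coord i) : A × Module.Dual K V) ⊗ₜ[K] ((T (b i), 0) : A × Module.Dual K V))))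
    = x1 (succ (T w2) (T w3) + prec (T w2) (T w3))
        + (x2 (T (ls (T w3) w1)) + x3 (T (rp (T w2) w1))) := by
  rw [tprod12_13]
  simp only [sum_tmul, tmul_sum, map_sum, tensorTensorTensorComm_tmul, add_tmul, tmul_add,
    map_add, map_tmul, lift.tmul, LinearMap.add_apply, sd_apply, LinearMap.id_coe, id_eq,
    dualize_apply, ev3_tmul, mkF_apply, map_zero, LinearMap.zero_apply, zero_add, add_zero,
    LinearMap.neg_apply, LinearMap.neg_apply, Prod.mk_add_mk, dualize, LinearMap.comp_apply,
    Module.Dual.transpose_apply]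
  calc _ = (∑ x : ι, ∑ x_1 : ι, b.coord x_1 w2 * (b.coord x w3 *
            (((succ + prec).compl₁₂ T T).compr₂ x1) (b x_1) (b x)))
        + ((∑ x : ι, ∑ x_1 : ι, b.coord x w3 *
            (b.coord x_1 (((ls ∘ₗ T).flip w1) (b x)) * (x2 ∘ₗ T) (b x_1)))
        + (∑ x : ι, ∑ x_1 : ι, b.coord x_1 w2 *
            (b.coord x (((rp ∘ₗ T).flip w1) (b x_1)) * (x3 ∘ₗ T) (b x)))) := by
        simp only [← Finset.sum_add_distrib]
        refine Finset.sum_congr rfl fun x _ => Finset.sum_congr rfl fun x_1 _ => ?_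
        simp only [LinearMap.compr₂_apply, LinearMap.compl₁₂_apply, LinearMap.flip_apply,
          LinearMap.comp_apply, LinearMap.add_apply, map_add, map_neg, LinearMap.neg_apply]
        ring
    _ = _ := by
        rw [collapseA b (((succ + prec).compl₁₂ T T).compr₂ x1) w2 w3,
          collapseB b ((ls ∘ₗ T).flip w1) (x2 ∘ₗ T) w3,
          collapseB' b ((rp ∘ₗ T).flip w1) (x3 ∘ₗ T) w2]
        simp only [LinearMap.compr₂_apply, LinearMap.compl₁₂_apply, LinearMap.flip_apply,
          LinearMap.comp_apply, LinearMap.add_apply, map_add]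
end P2d
section P2e
variable {K A V : Type*} [Field K] [AddCommGroup A] [Module K A]
    [AddCommGroup V] [Module K V]
    {ι : Type*} [Fintype ι]

lemma collapseA' (b : Basis ι K V) (S : V →ₗ[K] V →ₗ[K] K) (u v : V) :
    ∑ i : ι, ∑ j : ι, b.coord i u * (b.coord j v * S (b i) (b j)) = S u v := by
  rw [Finset.sum_comm]; exact collapseA b S u v

variable (b : Basis ι K V) (succ prec : A →ₗ[K] A →ₗ[K] A)
    (ls rs lp rp : A →ₗ[K] V →ₗ[K] V) (T : V →ₗ[K] A)
    (x1 x2 x3 : Module.Dual K A) (w1 w2 w3 : V)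

lemma E1323 :
    ev3 (mkF x1 w1) (mkF x2 w2) (mkF x3 w3)
      (tprod13_23 (sd prec (dualize (-rs)) (dualize (ls + lp)))
        (∑ i, (((T (b i), 0) : A × Module.Dual K V) ⊗ₜ[K] ((0, b.coord i) : A × Module.Dual K V)
          + ((0, b.coord i) : A × Module.Dual K V) ⊗ₜ[K] ((T (b i), 0) : A × Module.Dual K V))))
    = x1 (T (ls (T w2) w3 + lp (T w2) w3)) + (- x2 (T (rs (T w1) w3)) + x3 (prec (T w1) (T w2))) := by
  rw [tprod13_23]
  simp only [sum_tmul, tmul_sum, map_sum, tensorTensorTensorComm_tmul, add_tmul, tmul_add,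
    map_add, map_tmul, lift.tmul, LinearMap.add_apply, sd_apply, LinearMap.id_coe, id_eq,
    dualize_apply, ev3_tmul, mkF_apply, map_zero, LinearMap.zero_apply, zero_add, add_zero,
    LinearMap.neg_apply, LinearMap.neg_apply, Prod.mk_add_mk, dualize, LinearMap.comp_apply,
    Module.Dual.transpose_apply, assoc_tmul, comm_tmul, LinearEquiv.coe_coe, map_neg,
    LinearMap.coe_comp, Function.comp_apply]
  calc _ = (∑ x : ι, ∑ x_1 : ι, b.coord x w2 *
            (b.coord x_1 ((((ls + lp) ∘ₗ T).flip w3) (b x)) * (x1 ∘ₗ T) (b x_1)))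
        + ((∑ x : ι, ∑ x_1 : ι, b.coord x_1 w1 *
            (b.coord x (((rs ∘ₗ T).flip w3) (b x_1)) * (-(x2 ∘ₗ T)) (b x)))
        + (∑ x : ι, ∑ x_1 : ι, b.coord x_1 w1 * (b.coord x w2 *
            ((prec.compl₁₂ T T).compr₂ x3) (b x_1) (b x)))) := by
        simp only [← Finset.sum_add_distrib]
        refine Finset.sum_congr rfl fun x _ => Finset.sum_congr rfl fun x_1 _ => ?_
        simp only [LinearMap.compr₂_apply, LinearMap.compl₁₂_apply, LinearMap.flip_apply,
          LinearMap.comp_apply, LinearMap.add_apply, map_add, map_neg, LinearMap.neg_apply]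
        ring
    _ = _ := by
        rw [collapseB b (((ls + lp) ∘ₗ T).flip w3) (x1 ∘ₗ T) w2,
          collapseB' b ((rs ∘ₗ T).flip w3) (-(x2 ∘ₗ T)) w1,
          collapseA b ((prec.compl₁₂ T T).compr₂ x3) w1 w2]
        simp only [LinearMap.compr₂_apply, LinearMap.compl₁₂_apply, LinearMap.flip_apply,
          LinearMap.comp_apply, LinearMap.add_apply, LinearMap.neg_apply, map_add]

lemma E2312 :
    ev3 (mkF x1 w1) (mkF x2 w2) (mkF x3 w3)
      (tprod23_12 (sd succ (dualize (rs + rp)) (dualize (-lp)))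
        (∑ i, (((T (b i), 0) : A × Module.Dual K V) ⊗ₜ[K] ((0, b.coord i) : A × Module.Dual K V)
          + ((0, b.coord i) : A × Module.Dual K V) ⊗ₜ[K] ((T (b i), 0) : A × Module.Dual K V))))
    = x1 (T (rs (T w3) w2 + rp (T w3) w2)) + (x2 (succ (T w3) (T w1)) + - x3 (T (lp (T w1) w2))) := by
  rw [tprod23_12]
  simp only [sum_tmul, tmul_sum, map_sum, tensorTensorTensorComm_tmul, add_tmul, tmul_add,
    map_add, map_tmul, lift.tmul, LinearMap.add_apply, sd_apply, LinearMap.id_coe, id_eq,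
    dualize_apply, ev3_tmul, mkF_apply, map_zero, LinearMap.zero_apply, zero_add, add_zero,
    LinearMap.neg_apply, LinearMap.neg_apply, Prod.mk_add_mk, dualize, LinearMap.comp_apply,
    Module.Dual.transpose_apply, assoc_tmul, comm_tmul, LinearEquiv.coe_coe, map_neg,
    LinearMap.coe_comp, Function.comp_apply]
  calc _ = (∑ x : ι, ∑ x_1 : ι, b.coord x_1 w3 *
            (b.coord x ((((rs + rp) ∘ₗ T).flip w2) (b x_1)) * (x1 ∘ₗ T) (b x)))
        + ((∑ x : ι, ∑ x_1 : ι, b.coord x w1 * (b.coord x_1 w3 *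
            (((succ.compl₁₂ T T).compr₂ x2).flip (b x) (b x_1))))
        + (∑ x : ι, ∑ x_1 : ι, b.coord x w1 *
            (b.coord x_1 (((lp ∘ₗ T).flip w2) (b x)) * (-(x3 ∘ₗ T)) (b x_1)))) := by
        simp only [← Finset.sum_add_distrib]
        refine Finset.sum_congr rfl fun x _ => Finset.sum_congr rfl fun x_1 _ => ?_
        simp only [LinearMap.compr₂_apply, LinearMap.compl₁₂_apply, LinearMap.flip_apply,
          LinearMap.comp_apply, LinearMap.add_apply, map_add, map_neg, LinearMap.neg_apply]
        ring
    _ = _ := by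
        rw [collapseB' b (((rs + rp) ∘ₗ T).flip w2) (x1 ∘ₗ T) w3,
          collapseA' b (((succ.compl₁₂ T T).compr₂ x2).flip) w1 w3,
          collapseB b ((lp ∘ₗ T).flip w2) (-(x3 ∘ₗ T)) w1]
        simp only [LinearMap.compr₂_apply, LinearMap.compl₁₂_apply, LinearMap.flip_apply,
          LinearMap.comp_apply, LinearMap.add_apply, LinearMap.neg_apply, map_add]
end P2e
section P2f
variable {K A V : Type*} [Field K] [AddCommGroup A] [Module K A]
    [AddCommGroup V] [Module K V]

lemma mkF_surj [FiniteDimensional K V] (F : Module.Dual K (A × Module.Dual K V)) :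
    ∃ x w, F = mkF x w := by
  refine ⟨F ∘ₗ LinearMap.inl K A (Module.Dual K V),
    (Module.evalEquiv K V).symm (F ∘ₗ LinearMap.inr K A (Module.Dual K V)), ?_⟩
  apply LinearMap.ext
  rintro ⟨p, ξ⟩
  have h1 : (p, ξ) = (p, 0) + (0, ξ) := by simp
  have h2 : ξ ((Module.evalEquiv K V).symm (F ∘ₗ LinearMap.inr K A (Module.Dual K V)))
      = F (0, ξ) := by
    have := LinearEquiv.apply_symm_apply (Module.evalEquiv K V)
      (F ∘ₗ LinearMap.inr K A (Module.Dual K V))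
    have := LinearMap.congr_fun this ξ
    simpa [Module.evalEquiv_apply, Module.Dual.eval_apply] using this
  rw [h1, map_add, map_add, mkF_apply, mkF_apply]
  simp [h2, Prod.mk_zero_zero]

lemma comm_comm {B : Type*} [AddCommGroup B] [Module K B] (z : B ⊗[K] B) :
    TensorProduct.comm K B B (TensorProduct.comm K B B z) = z := by
  induction z using TensorProduct.induction_on <;> simp [*]

lemma sep' {B : Type*} [AddCommGroup B] [Module K B] [FiniteDimensional K B]
    {t₁ t₂ : B ⊗[K] (B ⊗[K] B)}
    (h : ∀ F G H : Module.Dual K B, ev3 F G H t₁ = ev3 F G H t₂) : t₁ = t₂ := by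
  rw [← sub_eq_zero]
  exact sep fun F G H => by rw [map_sub, h F G H, sub_self]

end P2f

/-- Theorem 3.3.5: let `(l_≻, r_≻, l_≺, r_≺, V)` be a bimodule of a finite-dimensional
dendriform algebra `(A, ≻, ≺)`; the dual maps
`(r_≻* + r_≺*, −l_≺*, −r_≻*, l_≻* + l_≺*)` form a bimodule of `(A, ≻, ≺)` on `V*`,
and, identifying a linear map `T : V → A` with an element of
`A ⊗ V* ⊆ (A ⋉ V*) ⊗ (A ⋉ V*)`, the element `r = T + σ(T)` is a symmetric solution of
the `D`-equation in the semidirect-product dendriform algebra `A ⋉ V*` if and only if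
`T` is an `O`-operator of `(A, ≻, ≺)` associated to `(l_≻, r_≻, l_≺, r_≺, V)`. -/
theorem symmetrized_Ooperator_solves_D_equation_iff
    {K A V : Type*} [Field K] [CharZero K] [AddCommGroup A] [Module K A]
    [FiniteDimensional K A] [AddCommGroup V] [Module K V] [FiniteDimensional K V]
    (succ prec : A →ₗ[K] A →ₗ[K] A)
    (hdend : IsDendriform succ prec)
    (ls rs lp rp : A →ₗ[K] V →ₗ[K] V)
    (hbim : IsDendBimodule succ prec ls rs lp rp)
    (T : V →ₗ[K] A) :
    IsDendBimodule succ prec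
      (dualize (rs + rp)) (dualize (-lp)) (dualize (-rs)) (dualize (ls + lp)) ∧
    ((((TensorProduct.comm K (A × Module.Dual K V) (A × Module.Dual K V))
          (asTensor T + (TensorProduct.comm K (A × Module.Dual K V)
            (A × Module.Dual K V)) (asTensor T))
        = asTensor T + (TensorProduct.comm K (A × Module.Dual K V)
            (A × Module.Dual K V)) (asTensor T)) ∧
      (tprod12_13
          (sd succ (dualize (rs + rp)) (dualize (-lp))
            + sd prec (dualize (-rs)) (dualize (ls + lp)))
          (asTensor T + (TensorProduct.comm K (A × Module.Dual K V)
            (A × Module.Dual K V)) (asTensor T))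
        = tprod13_23 (sd prec (dualize (-rs)) (dualize (ls + lp)))
            (asTensor T + (TensorProduct.comm K (A × Module.Dual K V)
              (A × Module.Dual K V)) (asTensor T))
          + tprod23_12 (sd succ (dualize (rs + rp)) (dualize (-lp)))
              (asTensor T + (TensorProduct.comm K (A × Module.Dual K V)
                (A × Module.Dual K V)) (asTensor T)))) ↔
     ((∀ u v : V, succ (T u) (T v) = T (ls (T u) v + rs (T v) u)) ∧
      (∀ u v : V, prec (T u) (T v) = T (lp (T u) v + rp (T v) u)))) := by
  classical
  refine ⟨dualBimodule succ prec ls rs lp rp hbim, ?_⟩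
  set b := Module.finBasis K V with hb
  have hr : asTensor T + (TensorProduct.comm K (A × Module.Dual K V)
      (A × Module.Dual K V)) (asTensor T)
      = ∑ i, (((T (b i), 0) : A × Module.Dual K V)
          ⊗ₜ[K] ((0, b.coord i) : A × Module.Dual K V)
        + ((0, b.coord i) : A × Module.Dual K V)
          ⊗ₜ[K] ((T (b i), 0) : A × Module.Dual K V)) := by
    rw [asTensor_eq b T, map_sum]
    simp only [comm_tmul]
    rw [← Finset.sum_add_distrib]
  have hsym : (TensorProduct.comm K (A × Module.Dual K V) (A × Module.Dual K V))
      (asTensor T + (TensorProduct.comm K (A × Module.Dual K V)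
        (A × Module.Dual K V)) (asTensor T))
      = asTensor T + (TensorProduct.comm K (A × Module.Dual K V)
          (A × Module.Dual K V)) (asTensor T) := by
    rw [map_add, comm_comm]
    exact add_comm _ _
  constructor
  · rintro ⟨-, hD⟩
    rw [hr] at hD
    have key : ∀ (x1 x2 x3 : Module.Dual K A) (w1 w2 w3 : V),
        x1 (succ (T w2) (T w3) + prec (T w2) (T w3))
            + (x2 (T (ls (T w3) w1)) + x3 (T (rp (T w2) w1)))
          = (x1 (T (ls (T w2) w3 + lp (T w2) w3))
              + (- x2 (T (rs (T w1) w3)) + x3 (prec (T w1) (T w2))))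
            + (x1 (T (rs (T w3) w2 + rp (T w3) w2))
              + (x2 (succ (T w3) (T w1)) + - x3 (T (lp (T w1) w2)))) := by
      intro x1 x2 x3 w1 w2 w3
      have := congrArg (ev3 (mkF x1 w1) (mkF x2 w2) (mkF x3 w3)) hD
      rwa [map_add, E1213, E1323, E2312] at this
    constructor
    · intro u v
      rw [← sub_eq_zero]
      refine (Module.forall_dual_apply_eq_zero_iff K _).mp fun φ => ?_
      have h := key 0 φ 0 v 0 u
      simp only [map_zero, LinearMap.zero_apply, zero_add, add_zero, neg_zero, map_add] at h
      simp only [map_sub, map_add]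
      linear_combination -h
    · intro u v
      rw [← sub_eq_zero]
      refine (Module.forall_dual_apply_eq_zero_iff K _).mp fun φ => ?_
      have h := key 0 0 φ u v 0
      simp only [map_zero, LinearMap.zero_apply, zero_add, add_zero, neg_zero, map_add] at h
      simp only [map_sub, map_add]
      linear_combination -h
  · rintro ⟨hsucc, hprec⟩
    refine ⟨hsym, ?_⟩
    rw [hr]
    apply sep'
    intro F G H
    obtain ⟨x1, w1, rfl⟩ := mkF_surj F
    obtain ⟨x2, w2, rfl⟩ := mkF_surj G
    obtain ⟨x3, w3, rfl⟩ := mkF_surj H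
    rw [map_add, E1213, E1323, E2312]
    have e1 := congrArg x1 (hsucc w2 w3)
    have e2 := congrArg x1 (hprec w2 w3)
    have e3 := congrArg x2 (hsucc w3 w1)
    have e4 := congrArg x3 (hprec w1 w2)
    simp only [map_add] at e1 e2 e3 e4 ⊢
    linear_combination e1 + e2 - e3 - e4
end

section
/- Let (A,*) be a finite-dimensional associative algebra over a field of characteristic zero, (l,r,V) a bimodule with V finite-dimensional, and T : V → A an O-operator of (A,*) associated to (l,r,V). Then: (i) T(V) ⊆ A is a subalgebra of (A,*) and carries a well-defined dendriform algebra structure determined by T(u)≻T(v) = T(l(T(u))v) and T(u)≺T(v) = T(r(T(v))u); (ii) (r*,0,0,l*,V*) is a bimodule of this dendriform algebra T(V); (iii) identifying T with the element Σ_i T(v_i)⊗v_i* ∈ T(V)⊗V* for a basis {v_i} of V with dual basis {v_i*}, the element r̃ = T + σ(T) is a symmetric solution of the D-equation in the semidirect product dendriform algebra T(V)⋉_{r*,0,0,l*}V*. -/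
set_option synthInstance.maxHeartbeats 1000000
set_option maxHeartbeats 1000000

open TensorProduct LinearMap Module

section Aux
variable {K : Type*} [Field K]

lemma aux_tprod12_13 {B ι : Type*} [AddCommGroup B] [Module K B] [Fintype ι]
    (m : B →ₗ[K] B →ₗ[K] B) (a b : ι → B) :
    tprod12_13 m (∑ i, a i ⊗ₜ[K] b i)
      = ∑ i, ∑ j, (m (a i) (a j)) ⊗ₜ[K] (b i ⊗ₜ[K] b j) := by
  unfold tprod12_13
  simp only [sum_tmul, tmul_sum, map_sum, tensorTensorTensorComm_tmul, map_tmul, lift.tmul,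
    id_coe, id_eq]
  rw [Finset.sum_comm]

lemma aux_tprod13_23 {B ι : Type*} [AddCommGroup B] [Module K B] [Fintype ι]
    (m : B →ₗ[K] B →ₗ[K] B) (a b : ι → B) :
    tprod13_23 m (∑ i, a i ⊗ₜ[K] b i)
      = ∑ i, ∑ j, a i ⊗ₜ[K] (a j ⊗ₜ[K] m (b i) (b j)) := by
  unfold tprod13_23
  simp only [sum_tmul, tmul_sum, map_sum, tensorTensorTensorComm_tmul, map_tmul, lift.tmul,
    id_coe, id_eq, assoc_tmul]
  rw [Finset.sum_comm]

lemma aux_tprod23_12 {B ι : Type*} [AddCommGroup B] [Module K B] [Fintype ι]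
    (m : B →ₗ[K] B →ₗ[K] B) (a b : ι → B) :
    tprod23_12 m (∑ i, a i ⊗ₜ[K] b i)
      = ∑ i, ∑ j, a i ⊗ₜ[K] (m (a j) (b i) ⊗ₜ[K] b j) := by
  unfold tprod23_12
  simp only [sum_tmul, tmul_sum, map_sum, tensorTensorTensorComm_tmul, map_tmul, lift.tmul,
    id_coe, id_eq, assoc_tmul, LinearEquiv.coe_coe, comm_tmul]

lemma aux_dual_decomp {V ι : Type*} [AddCommGroup V] [Module K V] [Fintype ι]
    (e : Basis ι K V) (g : Module.Dual K V) :
    g = ∑ j, g (e j) • e.coord j := by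
  ext v
  have hv := congrArg g (e.sum_repr v)
  simp only [map_sum, map_smul, smul_eq_mul] at hv
  simp only [LinearMap.sum_apply, LinearMap.smul_apply, Module.Basis.coord_apply, smul_eq_mul]
  rw [← hv]
  exact Finset.sum_congr rfl fun j _ => mul_comm _ _

lemma aux_shift {V M ι : Type*} [AddCommGroup V] [Module K V] [AddCommMonoid M] [Module K M]
    [Fintype ι] (e : Basis ι K V) (φ : Module.Dual K V →ₗ[K] V →ₗ[K] M) (f : V →ₗ[K] V) :
    ∑ i, φ (e.coord i ∘ₗ f) (e i) = ∑ i, φ (e.coord i) (f (e i)) := by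
  have h1 : ∀ i, φ (e.coord i ∘ₗ f) (e i)
      = ∑ j, e.coord i (f (e j)) • φ (e.coord j) (e i) := by
    intro i
    conv_lhs => rw [aux_dual_decomp e (e.coord i ∘ₗ f)]
    simp
  have h2 : ∀ i, φ (e.coord i) (f (e i))
      = ∑ j, e.coord j (f (e i)) • φ (e.coord i) (e j) := by
    intro i
    conv_lhs => rw [← e.sum_repr (f (e i))]
    simp only [Module.Basis.coord_apply, map_sum, map_smul]
  rw [Finset.sum_congr rfl fun i _ => h1 i, Finset.sum_congr rfl fun i _ => h2 i,
    Finset.sum_comm]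

lemma aux_sd_apply {A W : Type*} [AddCommGroup A] [Module K A] [AddCommGroup W] [Module K W]
    (m : A →ₗ[K] A →ₗ[K] A) (φ ψ : A →ₗ[K] W →ₗ[K] W) (x y : A) (a b : W) :
    sd m φ ψ (x, a) (y, b) = (m x y, φ x b + ψ y a) := by
  simp [sd, Prod.ext_iff]

lemma aux_dualize_apply {A V : Type*} [AddCommGroup A] [Module K A] [AddCommGroup V]
    [Module K V] (ρ : A →ₗ[K] V →ₗ[K] V) (x : A) (g : Module.Dual K V) :
    dualize ρ x g = g ∘ₗ ρ x := by
  simp [dualize, Module.Dual.transpose_apply]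

lemma aux_asTensor {A V ι : Type*} [AddCommGroup A] [Module K A] [AddCommGroup V] [Module K V]
    [FiniteDimensional K V] [Fintype ι] (e : Basis ι K V) (T : V →ₗ[K] A) :
    asTensor T = ∑ i, ((T (e i), 0) : A × Module.Dual K V) ⊗ₜ[K]
      (((0 : A), e.coord i) : A × Module.Dual K V) := by
  unfold asTensor
  have h : (dualTensorHomEquiv K V A).symm T = ∑ i, e.coord i ⊗ₜ[K] T (e i) := by
    rw [LinearEquiv.symm_apply_eq]
    ext v
    simp only [dualTensorHomEquiv, dualTensorHomEquivOfBasis_apply, map_sum, LinearMap.sum_apply,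
      dualTensorHom_apply, Module.Basis.coord_apply]
    calc T v = T (∑ i, e.repr v i • e i) := by rw [e.sum_repr]
    _ = ∑ i, e.repr v i • T (e i) := by rw [map_sum]; simp only [map_smul]
  rw [h]
  simp [map_sum, comm_tmul]
end Aux


section ShiftCor
variable {K : Type*} [Field K] {W V ι : Type*} [AddCommGroup W] [Module K W]
  [AddCommGroup V] [Module K V] [Fintype ι]

local notation "B" => W × Module.Dual K V

lemma aux_shiftA (e : Basis ι K V) (Tq : V →ₗ[K] W) (c : B) (f : V →ₗ[K] V) :
    (∑ j, ((((0 : W), e.coord j ∘ₗ f) : B) ⊗ₜ[K]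
        (c ⊗ₜ[K] (((Tq (e j), (0 : Module.Dual K V))) : B)) : B ⊗[K] (B ⊗[K] B)))
      = ∑ j, ((((0 : W), e.coord j) : B) ⊗ₜ[K]
          (c ⊗ₜ[K] (((Tq (f (e j)), (0 : Module.Dual K V))) : B))) := by
  have h := aux_shift e (show Module.Dual K V →ₗ[K] V →ₗ[K]
      ((W × Module.Dual K V) ⊗[K] ((W × Module.Dual K V) ⊗[K] (W × Module.Dual K V))) from
    ((TensorProduct.mk K B (B ⊗[K] B)).compl₁₂ (LinearMap.inr K W (Module.Dual K V))
      ((TensorProduct.mk K B B c) ∘ₗ (LinearMap.inl K W (Module.Dual K V)) ∘ₗ Tq))) f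
  simpa using h

lemma aux_shiftB (e : Basis ι K V) (Tq : V →ₗ[K] W) (c : B) (f : V →ₗ[K] V) :
    (∑ j, ((((0 : W), e.coord j ∘ₗ f) : B) ⊗ₜ[K]
        ((((Tq (e j), (0 : Module.Dual K V))) : B) ⊗ₜ[K] c) : B ⊗[K] (B ⊗[K] B)))
      = ∑ j, ((((0 : W), e.coord j) : B) ⊗ₜ[K]
          ((((Tq (f (e j)), (0 : Module.Dual K V))) : B) ⊗ₜ[K] c)) := by
  have h := aux_shift e (show Module.Dual K V →ₗ[K] V →ₗ[K]
      ((W × Module.Dual K V) ⊗[K] ((W × Module.Dual K V) ⊗[K] (W × Module.Dual K V))) from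
    ((TensorProduct.mk K B (B ⊗[K] B)).compl₁₂ (LinearMap.inr K W (Module.Dual K V))
      (((TensorProduct.mk K B B).flip c) ∘ₗ (LinearMap.inl K W (Module.Dual K V)) ∘ₗ Tq))) f
  simpa using h

lemma aux_shiftC (e : Basis ι K V) (Tq : V →ₗ[K] W) (c : B) (f : V →ₗ[K] V) :
    (∑ j, ((((Tq (e j), (0 : Module.Dual K V))) : B) ⊗ₜ[K]
        (c ⊗ₜ[K] (((0 : W), e.coord j ∘ₗ f) : B)) : B ⊗[K] (B ⊗[K] B)))
      = ∑ j, ((((Tq (f (e j)), (0 : Module.Dual K V))) : B) ⊗ₜ[K]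
          (c ⊗ₜ[K] (((0 : W), e.coord j) : B))) := by
  have h := aux_shift e (show Module.Dual K V →ₗ[K] V →ₗ[K]
      ((W × Module.Dual K V) ⊗[K] ((W × Module.Dual K V) ⊗[K] (W × Module.Dual K V))) from
    (((TensorProduct.mk K B (B ⊗[K] B)).compl₁₂
        ((LinearMap.inl K W (Module.Dual K V)) ∘ₗ Tq)
        ((TensorProduct.mk K B B c) ∘ₗ (LinearMap.inr K W (Module.Dual K V)))).flip)) f
  simpa using h

lemma aux_shiftD (e : Basis ι K V) (Tq : V →ₗ[K] W) (c : B) (f : V →ₗ[K] V) :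
    (∑ j, ((((Tq (e j), (0 : Module.Dual K V))) : B) ⊗ₜ[K]
        ((((0 : W), e.coord j ∘ₗ f) : B) ⊗ₜ[K] c) : B ⊗[K] (B ⊗[K] B)))
      = ∑ j, ((((Tq (f (e j)), (0 : Module.Dual K V))) : B) ⊗ₜ[K]
          ((((0 : W), e.coord j) : B) ⊗ₜ[K] c)) := by
  have h := aux_shift e (show Module.Dual K V →ₗ[K] V →ₗ[K]
      ((W × Module.Dual K V) ⊗[K] ((W × Module.Dual K V) ⊗[K] (W × Module.Dual K V))) from
    (((TensorProduct.mk K B (B ⊗[K] B)).compl₁₂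
        ((LinearMap.inl K W (Module.Dual K V)) ∘ₗ Tq)
        (((TensorProduct.mk K B B).flip c) ∘ₗ (LinearMap.inr K W (Module.Dual K V)))).flip)) f
  simpa using h

end ShiftCor


/-- Theorem 2.1.8 together with Corollary 3.3.6: if `T : V → A` is an `O`-operator of a
finite-dimensional associative algebra `(A, *)` associated to a bimodule `(l, r, V)`,
then `T(V)` is a subalgebra of `(A, *)` carrying a well-defined dendriform structure
with `T(u) ≻ T(v) = T(l(T(u))v)`, `T(u) ≺ T(v) = T(r(T(v))u)`; `(r*, 0, 0, l*, V*)` is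
a bimodule of this dendriform algebra; and `r̃ = T + σ(T)` is a symmetric solution of
the `D`-equation in the semidirect-product dendriform algebra `T(V) ⋉ V*`. -/
theorem Ooperator_range_dendriform_and_D_equation
    {K A V : Type*} [Field K] [CharZero K] [AddCommGroup A] [Module K A]
    [FiniteDimensional K A] [AddCommGroup V] [Module K V] [FiniteDimensional K V]
    (mul : A →ₗ[K] A →ₗ[K] A)
    (hassoc : ∀ x y z : A, mul (mul x y) z = mul x (mul y z))
    (l r : A →ₗ[K] V →ₗ[K] V)
    (hl : ∀ x y : A, l (mul x y) = l x ∘ₗ l y)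
    (hr : ∀ x y : A, r (mul x y) = r y ∘ₗ r x)
    (hlr : ∀ x y : A, l x ∘ₗ r y = r y ∘ₗ l x)
    (T : V →ₗ[K] A)
    (hT : ∀ u v : V, mul (T u) (T v) = T (l (T u) v + r (T v) u)) :
    (∀ u v : V, mul (T u) (T v) ∈ LinearMap.range T) ∧
    ∃ sW pW : LinearMap.range T →ₗ[K] LinearMap.range T →ₗ[K] LinearMap.range T,
      (∀ u v : V,
        sW ⟨T u, LinearMap.mem_range_self T u⟩ ⟨T v, LinearMap.mem_range_self T v⟩
          = ⟨T (l (T u) v), LinearMap.mem_range_self T (l (T u) v)⟩) ∧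
      (∀ u v : V,
        pW ⟨T u, LinearMap.mem_range_self T u⟩ ⟨T v, LinearMap.mem_range_self T v⟩
          = ⟨T (r (T v) u), LinearMap.mem_range_self T (r (T v) u)⟩) ∧
      IsDendriform sW pW ∧
      (∀ x y : LinearMap.range T, ((sW x y + pW x y : LinearMap.range T) : A)
          = mul (x : A) (y : A)) ∧
      IsDendBimodule sW pW
        (dualize (r ∘ₗ (LinearMap.range T).subtype)) 0 0
        (dualize (l ∘ₗ (LinearMap.range T).subtype)) ∧
      ((TensorProduct.comm K (LinearMap.range T × Module.Dual K V)
            (LinearMap.range T × Module.Dual K V))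
          (asTensor T.rangeRestrict
            + (TensorProduct.comm K (LinearMap.range T × Module.Dual K V)
                (LinearMap.range T × Module.Dual K V)) (asTensor T.rangeRestrict))
        = asTensor T.rangeRestrict
            + (TensorProduct.comm K (LinearMap.range T × Module.Dual K V)
                (LinearMap.range T × Module.Dual K V)) (asTensor T.rangeRestrict)) ∧
      (tprod12_13
          (sd sW (dualize (r ∘ₗ (LinearMap.range T).subtype)) 0
            + sd pW 0 (dualize (l ∘ₗ (LinearMap.range T).subtype)))
          (asTensor T.rangeRestrict
            + (TensorProduct.comm K (LinearMap.range T × Module.Dual K V)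
                (LinearMap.range T × Module.Dual K V)) (asTensor T.rangeRestrict))
        = tprod13_23 (sd pW 0 (dualize (l ∘ₗ (LinearMap.range T).subtype)))
            (asTensor T.rangeRestrict
              + (TensorProduct.comm K (LinearMap.range T × Module.Dual K V)
                  (LinearMap.range T × Module.Dual K V)) (asTensor T.rangeRestrict))
          + tprod23_12 (sd sW (dualize (r ∘ₗ (LinearMap.range T).subtype)) 0)
              (asTensor T.rangeRestrict
                + (TensorProduct.comm K (LinearMap.range T × Module.Dual K V)
                    (LinearMap.range T × Module.Dual K V))
                  (asTensor T.rangeRestrict))) := by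
  classical
  have hTrc : ∀ v : V, ((T.rangeRestrict v : LinearMap.range T) : A) = T v := fun _ => rfl
  obtain ⟨s, hs⟩ := T.rangeRestrict.exists_rightInverse_of_surjective
    (LinearMap.range_rangeRestrict T)
  have hsT : ∀ x : LinearMap.range T, T (s x) = (x : A) := by
    intro x
    exact congrArg Subtype.val (LinearMap.congr_fun hs x)
  have hvan : ∀ u w : V, T w = 0 → T (l (T u) w) = 0 := by
    intro u w hw
    have h := hT u w
    rw [hw] at h
    simpa using h.symm
  have hvan' : ∀ v w : V, T w = 0 → T (r (T v) w) = 0 := by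
    intro v w hw
    have h := hT w v
    rw [hw] at h
    simpa using h.symm
  set Tr := T.rangeRestrict with hTrdef
  let sW : (LinearMap.range T) →ₗ[K] (LinearMap.range T) →ₗ[K] (LinearMap.range T) :=
    LinearMap.mk₂ K (fun x y => Tr (l (x : A) (s y)))
      (fun x x' y => by simp) (fun c x y => by simp)
      (fun x y y' => by simp) (fun c x y => by simp)
  let pW : (LinearMap.range T) →ₗ[K] (LinearMap.range T) →ₗ[K] (LinearMap.range T) :=
    LinearMap.mk₂ K (fun x y => Tr (r (y : A) (s x)))
      (fun x x' y => by simp) (fun c x y => by simp)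
      (fun x y y' => by simp) (fun c x y => by simp)
  have hsW : ∀ u v : V, sW (Tr u) (Tr v) = Tr (l (T u) v) := by
    intro u v
    apply Subtype.ext
    show T (l (T u) (s (Tr v))) = T (l (T u) v)
    have h0 : T (s (Tr v) - v) = 0 := by rw [map_sub, hsT, hTrc, sub_self]
    have h1 := hvan u _ h0
    rw [map_sub, map_sub, sub_eq_zero] at h1
    exact h1
  have hpW : ∀ u v : V, pW (Tr u) (Tr v) = Tr (r (T v) u) := by
    intro u v
    apply Subtype.ext
    show T (r (T v) (s (Tr u))) = T (r (T v) u)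
    have h0 : T (s (Tr u) - u) = 0 := by rw [map_sub, hsT, hTrc, sub_self]
    have h1 := hvan' v _ h0
    rw [map_sub, map_sub, sub_eq_zero] at h1
    exact h1
  have hsurj : ∀ x : LinearMap.range T, ∃ u, Tr u = x :=
    fun x => ⟨s x, Subtype.ext (hsT x)⟩
  have hsum : ∀ x y : LinearMap.range T,
      ((sW x y + pW x y : LinearMap.range T) : A) = mul (x : A) (y : A) := by
    intro x y
    obtain ⟨u, rfl⟩ := hsurj x
    obtain ⟨v, rfl⟩ := hsurj y
    rw [hsW, hpW]
    show T (l (T u) v) + T (r (T v) u) = mul (T u) (T v)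
    rw [← map_add]
    exact (hT u v).symm
  refine ⟨fun u v => by rw [hT]; exact LinearMap.mem_range_self T _,
    sW, pW, fun u v => hsW u v, fun u v => hpW u v, ?_, hsum, ?_, ?_, ?_⟩
  · -- IsDendriform
    refine ⟨?_, ?_, ?_⟩ <;> intro x y z <;>
      obtain ⟨u, rfl⟩ := hsurj x <;> obtain ⟨v, rfl⟩ := hsurj y <;> obtain ⟨w, rfl⟩ := hsurj z
    · rw [hpW u v, hpW (r (T v) u) w, hsW v w, hpW v w, ← map_add,
        hpW u (l (T v) w + r (T w) v)]
      refine congrArg Tr ?_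
      rw [← hT v w, hr]
      rfl
    · rw [hsW u v, hpW (l (T u) v) w, hpW v w, hsW u (r (T w) v)]
      exact congrArg Tr (LinearMap.congr_fun (hlr (T u) (T w)) v).symm
    · rw [hsW v w, hsW u (l (T v) w), hsW u v, hpW u v, ← map_add,
        hsW (l (T u) v + r (T v) u) w]
      refine congrArg Tr ?_
      rw [← hT u v, hl]
      rfl
  · -- IsDendBimodule
    refine ⟨?_, ?_, ?_, ?_, ?_, ?_, ?_, ?_, ?_⟩ <;> intro x y
    · simp
    · simp
    · ext g v
      simp only [coe_comp, Function.comp_apply, aux_dualize_apply, comp_apply,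
        Submodule.coe_subtype]
      rw [hsum y x, hl]
      rfl
    · simp
    · ext g v
      simp only [coe_comp, Function.comp_apply, aux_dualize_apply, comp_apply,
        Submodule.coe_subtype]
      exact congrArg g (LinearMap.congr_fun (hlr (x : A) (y : A)) v).symm
    · simp
    · ext g v
      simp only [coe_comp, Function.comp_apply, aux_dualize_apply, comp_apply,
        Submodule.coe_subtype]
      rw [hsum x y, hr]
      rfl
    · simp
    · simp
  · -- symmetry
    have hcc : ∀ z : (LinearMap.range T × Module.Dual K V) ⊗[K]
        (LinearMap.range T × Module.Dual K V),
        (TensorProduct.comm K _ _) ((TensorProduct.comm K _ _) z) = z := by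
      intro z
      refine z.induction_on (by simp) (fun a b => by simp) (fun a b ha hb => by
        simp [map_add, ha, hb])
    rw [map_add, hcc]
    exact add_comm _ _
  · -- D-equation
    set e := Module.finBasis K V with he
    have h1 : ∀ i j, sd sW (dualize (r ∘ₗ (LinearMap.range T).subtype)) 0
        ((Tr (e i), (0 : Module.Dual K V))) ((Tr (e j), (0 : Module.Dual K V)))
        = ((Tr (l (T (e i)) (e j)), (0 : Module.Dual K V))) := by
      intro i j
      rw [aux_sd_apply, hsW]
      simp
    have h2 : ∀ i j, sd sW (dualize (r ∘ₗ (LinearMap.range T).subtype)) 0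
        ((Tr (e i), (0 : Module.Dual K V))) (((0 : LinearMap.range T), e.coord j))
        = (((0 : LinearMap.range T), e.coord j ∘ₗ r (T (e i)))) := by
      intro i j
      rw [aux_sd_apply]
      simp [aux_dualize_apply, hTrc]
    have h3 : ∀ i j, sd sW (dualize (r ∘ₗ (LinearMap.range T).subtype)) 0
        (((0 : LinearMap.range T), e.coord i)) ((Tr (e j), (0 : Module.Dual K V))) = 0 := by
      intro i j
      rw [aux_sd_apply]
      simp [Prod.ext_iff]
    have h4 : ∀ i j, sd sW (dualize (r ∘ₗ (LinearMap.range T).subtype)) 0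
        (((0 : LinearMap.range T), e.coord i)) (((0 : LinearMap.range T), e.coord j)) = 0 := by
      intro i j
      rw [aux_sd_apply]
      simp [Prod.ext_iff]
    have h5 : ∀ i j, sd pW 0 (dualize (l ∘ₗ (LinearMap.range T).subtype))
        ((Tr (e i), (0 : Module.Dual K V))) ((Tr (e j), (0 : Module.Dual K V)))
        = ((Tr (r (T (e j)) (e i)), (0 : Module.Dual K V))) := by
      intro i j
      rw [aux_sd_apply, hpW]
      simp
    have h6 : ∀ i j, sd pW 0 (dualize (l ∘ₗ (LinearMap.range T).subtype))
        ((Tr (e i), (0 : Module.Dual K V))) (((0 : LinearMap.range T), e.coord j)) = 0 := by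
      intro i j
      rw [aux_sd_apply]
      simp [Prod.ext_iff]
    have h7 : ∀ i j, sd pW 0 (dualize (l ∘ₗ (LinearMap.range T).subtype))
        (((0 : LinearMap.range T), e.coord i)) ((Tr (e j), (0 : Module.Dual K V)))
        = (((0 : LinearMap.range T), e.coord i ∘ₗ l (T (e j)))) := by
      intro i j
      rw [aux_sd_apply]
      simp [aux_dualize_apply, hTrc]
    have h8 : ∀ i j, sd pW 0 (dualize (l ∘ₗ (LinearMap.range T).subtype))
        (((0 : LinearMap.range T), e.coord i)) (((0 : LinearMap.range T), e.coord j)) = 0 := by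
      intro i j
      rw [aux_sd_apply]
      simp [Prod.ext_iff]
    have hAs : asTensor Tr = ∑ i, ((Tr (e i), (0 : Module.Dual K V)) :
          LinearMap.range T × Module.Dual K V) ⊗ₜ[K]
        ((((0 : LinearMap.range T), e.coord i)) : LinearMap.range T × Module.Dual K V) :=
      aux_asTensor e Tr
    have hrt : asTensor Tr + (TensorProduct.comm K (LinearMap.range T × Module.Dual K V)
          (LinearMap.range T × Module.Dual K V)) (asTensor Tr)
        = ∑ st : Fin (finrank K V) ⊕ Fin (finrank K V),
            (Sum.elim (fun i => ((Tr (e i), (0 : Module.Dual K V)) :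
                LinearMap.range T × Module.Dual K V))
              (fun i => (((0 : LinearMap.range T), e.coord i))) st) ⊗ₜ[K]
            (Sum.elim (fun i => ((((0 : LinearMap.range T), e.coord i)) :
                LinearMap.range T × Module.Dual K V))
              (fun i => ((Tr (e i), (0 : Module.Dual K V)))) st) := by
      rw [hAs, map_sum]
      simp only [comm_tmul, Fintype.sum_sum_type, Sum.elim_inl, Sum.elim_inr]
    rw [hrt, aux_tprod12_13, aux_tprod13_23, aux_tprod23_12]
    simp only [Fintype.sum_sum_type, Sum.elim_inl, Sum.elim_inr, LinearMap.add_apply,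
      h1, h2, h3, h4, h5, h6, h7, h8, add_tmul, tmul_zero, zero_tmul,
      Finset.sum_const_zero, add_zero, zero_add, Finset.sum_add_distrib]
    have HB2 : (∑ i : Fin (finrank K V), ∑ j : Fin (finrank K V),
          (((0 : LinearMap.range T), e.coord j ∘ₗ r (T (e i))) :
              LinearMap.range T × Module.Dual K V) ⊗ₜ[K]
            ((((0 : LinearMap.range T), e.coord i) : LinearMap.range T × Module.Dual K V) ⊗ₜ[K]
              ((Tr (e j), (0 : Module.Dual K V)) : LinearMap.range T × Module.Dual K V)))
        = ∑ i : Fin (finrank K V), ∑ j : Fin (finrank K V),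
            (((0 : LinearMap.range T), e.coord i) : LinearMap.range T × Module.Dual K V) ⊗ₜ[K]
              ((((0 : LinearMap.range T), e.coord j) :
                  LinearMap.range T × Module.Dual K V) ⊗ₜ[K]
                ((Tr (r (T (e j)) (e i)), (0 : Module.Dual K V)) :
                  LinearMap.range T × Module.Dual K V)) := by
      rw [Finset.sum_congr rfl fun i (_ : i ∈ Finset.univ) =>
        aux_shiftA e Tr ((0 : LinearMap.range T), e.coord i) (r (T (e i)))]
      exact Finset.sum_comm
    have HB4 : (∑ i : Fin (finrank K V), ∑ j : Fin (finrank K V),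
          (((0 : LinearMap.range T), e.coord i ∘ₗ l (T (e j))) :
              LinearMap.range T × Module.Dual K V) ⊗ₜ[K]
            (((Tr (e i), (0 : Module.Dual K V)) : LinearMap.range T × Module.Dual K V) ⊗ₜ[K]
              (((0 : LinearMap.range T), e.coord j) : LinearMap.range T × Module.Dual K V)))
        = ∑ i : Fin (finrank K V), ∑ j : Fin (finrank K V),
            (((0 : LinearMap.range T), e.coord i) : LinearMap.range T × Module.Dual K V) ⊗ₜ[K]
              (((Tr (l (T (e j)) (e i)), (0 : Module.Dual K V)) :
                  LinearMap.range T × Module.Dual K V) ⊗ₜ[K]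
                (((0 : LinearMap.range T), e.coord j) :
                  LinearMap.range T × Module.Dual K V)) := by
      rw [Finset.sum_comm]
      rw [Finset.sum_congr rfl fun j (_ : j ∈ Finset.univ) =>
        aux_shiftB e Tr ((0 : LinearMap.range T), e.coord j) (l (T (e j)))]
      exact Finset.sum_comm
    have HC1 : (∑ i : Fin (finrank K V), ∑ j : Fin (finrank K V),
          ((Tr (e i), (0 : Module.Dual K V)) : LinearMap.range T × Module.Dual K V) ⊗ₜ[K]
            ((((0 : LinearMap.range T), e.coord j) : LinearMap.range T × Module.Dual K V) ⊗ₜ[K]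
              (((0 : LinearMap.range T), e.coord i ∘ₗ l (T (e j))) :
                LinearMap.range T × Module.Dual K V)))
        = ∑ i : Fin (finrank K V), ∑ j : Fin (finrank K V),
            ((Tr (l (T (e i)) (e j)), (0 : Module.Dual K V)) :
                LinearMap.range T × Module.Dual K V) ⊗ₜ[K]
              ((((0 : LinearMap.range T), e.coord i) :
                  LinearMap.range T × Module.Dual K V) ⊗ₜ[K]
                (((0 : LinearMap.range T), e.coord j) :
                  LinearMap.range T × Module.Dual K V)) := by
      rw [Finset.sum_comm]
      exact Finset.sum_congr rfl fun j _ =>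
        aux_shiftC e Tr ((0 : LinearMap.range T), e.coord j) (l (T (e j)))
    have HC3 : (∑ i : Fin (finrank K V), ∑ j : Fin (finrank K V),
          ((Tr (e i), (0 : Module.Dual K V)) : LinearMap.range T × Module.Dual K V) ⊗ₜ[K]
            ((((0 : LinearMap.range T), e.coord i ∘ₗ r (T (e j))) :
                LinearMap.range T × Module.Dual K V) ⊗ₜ[K]
              (((0 : LinearMap.range T), e.coord j) : LinearMap.range T × Module.Dual K V)))
        = ∑ i : Fin (finrank K V), ∑ j : Fin (finrank K V),
            ((Tr (r (T (e j)) (e i)), (0 : Module.Dual K V)) :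
                LinearMap.range T × Module.Dual K V) ⊗ₜ[K]
              ((((0 : LinearMap.range T), e.coord i) :
                  LinearMap.range T × Module.Dual K V) ⊗ₜ[K]
                (((0 : LinearMap.range T), e.coord j) :
                  LinearMap.range T × Module.Dual K V)) := by
      rw [Finset.sum_comm]
      rw [Finset.sum_congr rfl fun j (_ : j ∈ Finset.univ) =>
        aux_shiftD e Tr ((0 : LinearMap.range T), e.coord j) (r (T (e j)))]
      exact Finset.sum_comm
    rw [HB2, HB4, HC1, HC3]
end
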